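/- (Existence of PNE.) The mixed-binary quadratic game G^MBQP has at least one pure-strategy Nash equilibrium if: (i) the Key Property (KP) is satisfied for every player's problem P_i^MBQP(x_{-i}); (ii) each block Q^{(i)}_{ii} is positive semidefinite; and (iii) the corresponding completely positive game G^CPP has a pure-strategy Nash equilibrium ((x_i*, X_i*))_{i∈I} with x*_{ik} ∈ {0,1} for every k ∈ B_i and every i ∈ I. -/

import Mathlib

open Matrix BigOperators Finset

section Helpers

lemma trace_mul_nonneg' {N : Type*} [Fintype N] [DecidableEq N] {P M : Matrix N N ℝ}
    (hP : P.PosSemidef) (hM : M.PosSemidef) : 0 ≤ Matrix.trace (P * M) := by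
  obtain ⟨r, v, rfl⟩ := Matrix.posSemidef_iff_eq_sum_vecMulVec.mp hP
  rw [Finset.sum_mul, Matrix.trace_sum]
  refine Finset.sum_nonneg fun t _ => ?_
  have h := hM.dotProduct_mulVec_nonneg (v t)
  have e : Matrix.trace (vecMulVec (v t) (star (v t)) * M) = star (v t) ⬝ᵥ (M *ᵥ v t) := by
    simp only [Matrix.trace, Matrix.diag, Matrix.mul_apply, vecMulVec_apply, dotProduct, mulVec,
      Finset.mul_sum, star_trivial]
    rw [Finset.sum_comm]
    exact Finset.sum_congr rfl fun i _ => Finset.sum_congr rfl fun j _ => by ring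
  rw [e]; exact h

lemma trace_lin {N : ℕ} (u : Fin N → ℝ) (l : Fin N) (Y : Matrix (Fin N) (Fin N) ℝ)
    (hsymm : ∀ p q, Y p q = Y q p) :
    Matrix.trace (((1 / 2 : ℝ) •
      (Matrix.vecMulVec u (Pi.single l 1) + Matrix.vecMulVec (Pi.single l 1) u)) * Y)
      = ∑ j, Y l j * u j := by
  simp only [Matrix.trace, Matrix.diag, Matrix.mul_apply, Matrix.smul_apply, Matrix.add_apply,
    Matrix.vecMulVec_apply, Pi.single_apply, smul_eq_mul, mul_add, add_mul, mul_ite, ite_mul,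
    mul_one, mul_zero, zero_mul, one_mul, Finset.sum_add_distrib, Finset.sum_ite_eq,
    Finset.sum_ite_eq', Finset.mem_univ, if_true]
  have h2 : (∑ x : Fin N, ∑ x_1 : Fin N, if x = l then 1 / 2 * u x_1 * Y x_1 x else 0)
      = ∑ x_1 : Fin N, 1 / 2 * u x_1 * Y x_1 l := by
    rw [Finset.sum_comm]; simp
  rw [h2, ← Finset.sum_add_distrib]
  exact Finset.sum_congr rfl fun j _ => by rw [hsymm j l]; ring

lemma quad_AAt {N r : ℕ} (A : Matrix (Fin N) (Fin r) ℝ) (x z : Fin N → ℝ) :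
    x ⬝ᵥ ((A * Aᵀ) *ᵥ z) = ∑ t, (∑ j, x j * A j t) * (∑ j, z j * A j t) := by
  calc x ⬝ᵥ ((A * Aᵀ) *ᵥ z) = ∑ p, ∑ q, ∑ t, x p * A p t * (z q * A q t) := by
        simp only [dotProduct, Matrix.mulVec, Matrix.mul_apply, Matrix.transpose_apply,
          Finset.sum_mul, Finset.mul_sum]
        exact Finset.sum_congr rfl fun p _ => Finset.sum_congr rfl fun q _ =>
          Finset.sum_congr rfl fun t _ => by ring
    _ = ∑ t, (∑ j, x j * A j t) * (∑ j, z j * A j t) := by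
        have e1 : ∀ p : Fin N, (∑ q : Fin N, ∑ t : Fin r, x p * A p t * (z q * A q t))
            = ∑ t : Fin r, ∑ q : Fin N, x p * A p t * (z q * A q t) :=
          fun p => Finset.sum_comm
        simp_rw [e1]
        rw [Finset.sum_comm]
        refine Finset.sum_congr rfl fun t _ => ?_
        rw [Finset.sum_mul_sum]


lemma trace_gap {N : ℕ} {Qm Y : Matrix (Fin N) (Fin N) ℝ} (hQ : Qm.PosSemidef)
    {y u : Fin N → ℝ}
    (hY : ∃ (r : ℕ) (A : Matrix (Fin N) (Fin r) ℝ), (∀ i j, 0 ≤ A i j) ∧ Y = A * Aᵀ)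
    (hy : ∀ l, y l = ∑ j, Y l j * u j) (hu : u ⬝ᵥ y = 1) :
    Matrix.trace (Qm * Matrix.vecMulVec y y) ≤ Matrix.trace (Qm * Y) := by
  obtain ⟨r, A, hA, rfl⟩ := hY
  have hyv : y = (A * Aᵀ) *ᵥ u := funext fun l => hy l
  have hsum : (∑ t, (∑ j, u j * A j t) ^ 2) = 1 := by
    rw [← hu, hyv, show u ⬝ᵥ ((A * Aᵀ) *ᵥ u) = ∑ t, (∑ j, u j * A j t) * (∑ j, u j * A j t)
      from quad_AAt A u u]
    exact Finset.sum_congr rfl fun t _ => (pow_two _)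
  have hpsd2 : (A * Aᵀ - Matrix.vecMulVec y y).PosSemidef := by
    refine Matrix.PosSemidef.of_dotProduct_mulVec_nonneg ?_ ?_
    · ext p q
      simp only [Matrix.conjTranspose_apply, Matrix.sub_apply, Matrix.mul_apply,
        Matrix.transpose_apply, Matrix.vecMulVec_apply, star_trivial, star_sub, star_mul',
        RCLike.star_def]
      rw [show (∑ t, A q t * A p t) = ∑ t, A p t * A q t from
        Finset.sum_congr rfl fun t _ => mul_comm _ _, mul_comm (y q)]
    · intro x
      have hcs : (y ⬝ᵥ x) ^ 2 ≤ x ⬝ᵥ ((A * Aᵀ) *ᵥ x) := by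
        have h1 : y ⬝ᵥ x = ∑ t, (∑ j, x j * A j t) * (∑ j, u j * A j t) := by
          rw [dotProduct_comm, hyv, quad_AAt]
        rw [h1, quad_AAt]
        calc (∑ t, (∑ j, x j * A j t) * (∑ j, u j * A j t)) ^ 2
            ≤ (∑ t, (∑ j, x j * A j t) ^ 2) * ∑ t, (∑ j, u j * A j t) ^ 2 :=
              Finset.sum_mul_sq_le_sq_mul_sq _ _ _
          _ = ∑ t, (∑ j, x j * A j t) * (∑ j, x j * A j t) := by
              rw [hsum, mul_one]; exact Finset.sum_congr rfl fun t _ => sq _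
      have hvv : x ⬝ᵥ (Matrix.vecMulVec y y *ᵥ x) = (y ⬝ᵥ x) ^ 2 := by
        simp only [dotProduct, Matrix.mulVec, Matrix.vecMulVec_apply, sq,
          Finset.mul_sum, Finset.sum_mul]
        exact Finset.sum_congr rfl fun p _ => Finset.sum_congr rfl fun q _ => by ring
      simp only [star_trivial, Matrix.sub_mulVec, dotProduct_sub, hvv]
      linarith
  have h0 := trace_mul_nonneg' hQ hpsd2
  rw [Matrix.mul_sub, Matrix.trace_sub] at h0
  linarith


/-- The completely positive cone: `M = A * Aᵀ` for some entrywise nonnegative matrix `A`. -/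
def IsCP {ι : Type*} [Fintype ι] (M : Matrix ι ι ℝ) : Prop :=
  ∃ (r : ℕ) (A : Matrix ι (Fin r) ℝ), (∀ i j, 0 ≤ A i j) ∧ M = A * Aᵀ

variable {I : Type*} [Fintype I] [DecidableEq I] {n : I → ℕ} {m : I → ℕ}

/-- Concatenation of a strategy profile into one long vector. -/
def conc (s : (i : I) → Fin (n i) → ℝ) : ((i : I) × Fin (n i)) → ℝ := fun p => s p.1 p.2

/-- Feasibility for player `i`'s problem `P_i^MBQP` (the constraints do not involve
the other players). -/
def MBQPFeas (a : (i : I) → Fin (m i) → Fin (n i) → ℝ) (b : (i : I) → Fin (m i) → ℝ)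
    (B : (i : I) → Set (Fin (n i))) (i : I) (y : Fin (n i) → ℝ) : Prop :=
  (∀ j, a i j ⬝ᵥ y = b i j) ∧ (∀ k ∈ B i, y k = 0 ∨ y k = 1) ∧ (∀ k, 0 ≤ y k)

/-- Player `i`'s payoff `f_i(x) = xᵀQ^{(i)}x + 2c^{(i)ᵀ}x` on the full profile. -/
def payoff (Q : (i : I) → Matrix ((i : I) × Fin (n i)) ((i : I) × Fin (n i)) ℝ)
    (c : (i : I) → ((i : I) × Fin (n i)) → ℝ) (i : I)
    (s : (i : I) → Fin (n i) → ℝ) : ℝ :=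
  conc s ⬝ᵥ (Q i *ᵥ conc s) + 2 * (c i ⬝ᵥ conc s)

/-- Pure-strategy Nash equilibrium of the mixed-binary quadratic game `G^MBQP`. -/
def MBQP_PNE (a : (i : I) → Fin (m i) → Fin (n i) → ℝ) (b : (i : I) → Fin (m i) → ℝ)
    (B : (i : I) → Set (Fin (n i)))
    (Q : (i : I) → Matrix ((i : I) × Fin (n i)) ((i : I) × Fin (n i)) ℝ)
    (c : (i : I) → ((i : I) × Fin (n i)) → ℝ)
    (s : (i : I) → Fin (n i) → ℝ) : Prop :=
  ∀ i : I, MBQPFeas a b B i (s i) ∧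
    ∀ y : Fin (n i) → ℝ, MBQPFeas a b B i y →
      payoff Q c i s ≤ payoff Q c i (Function.update s i y)

/-- Feasibility for player `i`'s problem `P_i^CPP` in the completely positive game. -/
def CPPFeas (a : (i : I) → Fin (m i) → Fin (n i) → ℝ) (b : (i : I) → Fin (m i) → ℝ)
    (B : (i : I) → Set (Fin (n i))) (α : (i : I) → Fin (n i) → ℝ) (i : I)
    (y : Fin (n i) → ℝ) (Y : Matrix (Fin (n i)) (Fin (n i)) ℝ) : Prop :=
  (∀ j, a i j ⬝ᵥ y = b i j) ∧
  (∀ j, a i j ⬝ᵥ (Y *ᵥ a i j) = (b i j) ^ 2) ∧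
  (∀ k ∈ B i, y k = Y k k) ∧
  (∀ l, y l = Matrix.trace (((1 / 2 : ℝ) •
    (Matrix.vecMulVec (α i) (Pi.single l 1) + Matrix.vecMulVec (Pi.single l 1) (α i))) * Y)) ∧
  IsCP Y

/-- Player `i`'s payoff `F_i(x_i, X_i, x_{-i})` in the completely positive game:
`Tr(Q^{(i)}_{ii}X_i) + 2x_{-i}ᵀQ^{(i)}_{-i,i}x_i + x_{-i}ᵀQ^{(i)}_{-i,-i}x_{-i} + 2c^{(i)ᵀ}x`. -/
def Fpay (Q : (i : I) → Matrix ((i : I) × Fin (n i)) ((i : I) × Fin (n i)) ℝ)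
    (c : (i : I) → ((i : I) × Fin (n i)) → ℝ) (i : I)
    (s : (i : I) → Fin (n i) → ℝ) (Y : Matrix (Fin (n i)) (Fin (n i)) ℝ) : ℝ :=
  Matrix.trace ((Matrix.of fun k l => Q i ⟨i, k⟩ ⟨i, l⟩) * Y)
  + 2 * (∑ p : (i : I) × Fin (n i), ∑ k : Fin (n i),
      if p.1 ≠ i then Q i p ⟨i, k⟩ * conc s p * s i k else 0)
  + (∑ p : (i : I) × Fin (n i), ∑ q : (i : I) × Fin (n i),
      if p.1 ≠ i ∧ q.1 ≠ i then Q i p q * conc s p * conc s q else 0)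
  + 2 * (c i ⬝ᵥ conc s)

/-- Pure-strategy Nash equilibrium of the completely positive game `G^CPP`. -/
def CPP_PNE (a : (i : I) → Fin (m i) → Fin (n i) → ℝ) (b : (i : I) → Fin (m i) → ℝ)
    (B : (i : I) → Set (Fin (n i))) (α : (i : I) → Fin (n i) → ℝ)
    (Q : (i : I) → Matrix ((i : I) × Fin (n i)) ((i : I) × Fin (n i)) ℝ)
    (c : (i : I) → ((i : I) × Fin (n i)) → ℝ)
    (s : (i : I) → Fin (n i) → ℝ)
    (XX : (i : I) → Matrix (Fin (n i)) (Fin (n i)) ℝ) : Prop :=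
  ∀ i : I, CPPFeas a b B α i (s i) (XX i) ∧
    ∀ (y : Fin (n i) → ℝ) (Y : Matrix (Fin (n i)) (Fin (n i)) ℝ),
      CPPFeas a b B α i y Y →
        Fpay Q c i s (XX i) ≤ Fpay Q c i (Function.update s i y) Y

/-- The Key Property (KP) for player `i`, with witness `α i = Σ_j y_j a_j^{(i)}`. -/
def KeyProperty (a : (i : I) → Fin (m i) → Fin (n i) → ℝ) (b : (i : I) → Fin (m i) → ℝ)
    (α : (i : I) → Fin (n i) → ℝ) : Prop :=
  ∀ i : I, ∃ y : Fin (m i) → ℝ,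
    (α i = ∑ j, y j • a i j) ∧ (∀ k, 0 ≤ α i k) ∧ (∑ j, y j * b i j) = 1


section Aux

lemma sum_eq_add_ite {γ : Type*} [Fintype γ] [DecidableEq γ] (i : γ) (h : γ → ℝ) :
    ∑ j, h j = h i + ∑ j, if j ≠ i then h j else 0 := by
  have h1 : (∑ j, if j ≠ i then h j else 0) = ∑ j ∈ Finset.univ.erase i, h j := by
    rw [← Finset.sum_filter, Finset.filter_ne']
  rw [h1, Finset.add_sum_erase _ h (Finset.mem_univ i)]

lemma sum_split (i : I) (f : ((j : I) × Fin (n j)) → ℝ) :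
    ∑ p, f p = (∑ k, f ⟨i, k⟩) + ∑ p, if p.1 ≠ i then f p else 0 := by
  rw [← Finset.univ_sigma_univ, Finset.sum_sigma, Finset.sum_sigma]
  rw [sum_eq_add_ite i (fun j => ∑ k, f ⟨j, k⟩)]
  congr 1
  exact Finset.sum_congr rfl fun j _ => by split <;> simp

lemma quad_decomp (i : I) (Qi : Matrix ((j : I) × Fin (n j)) ((j : I) × Fin (n j)) ℝ)
    (hQ : Qi.IsSymm) (x : ((j : I) × Fin (n j)) → ℝ) :
    x ⬝ᵥ (Qi *ᵥ x) = (∑ k, ∑ l, Qi ⟨i, k⟩ ⟨i, l⟩ * x ⟨i, k⟩ * x ⟨i, l⟩)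
      + 2 * (∑ p, ∑ k, if p.1 ≠ i then Qi p ⟨i, k⟩ * x p * x ⟨i, k⟩ else 0)
      + (∑ p, ∑ q, if p.1 ≠ i ∧ q.1 ≠ i then Qi p q * x p * x q else 0) := by
  have hg : x ⬝ᵥ (Qi *ᵥ x) = ∑ p, ∑ q, Qi p q * x p * x q := by
    simp only [dotProduct, Matrix.mulVec, Finset.mul_sum]
    exact Finset.sum_congr rfl fun p _ => Finset.sum_congr rfl fun q _ => by ring
  rw [hg, sum_split i (fun p => ∑ q, Qi p q * x p * x q)]
  have e1 : ∀ p : (j : I) × Fin (n j), (∑ q, Qi p q * x p * x q)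
      = (∑ l, Qi p ⟨i, l⟩ * x p * x ⟨i, l⟩)
        + ∑ q, if q.1 ≠ i then Qi p q * x p * x q else 0 :=
    fun p => sum_split i _
  simp_rw [e1]
  rw [Finset.sum_add_distrib]
  have e2 : (∑ p, if p.1 ≠ i then (∑ l, Qi p ⟨i, l⟩ * x p * x ⟨i, l⟩)
        + ∑ q, if q.1 ≠ i then Qi p q * x p * x q else 0 else 0)
      = (∑ p, if p.1 ≠ i then (∑ l, Qi p ⟨i, l⟩ * x p * x ⟨i, l⟩) else 0)
        + ∑ p, if p.1 ≠ i then ∑ q, if q.1 ≠ i then Qi p q * x p * x q else 0 else 0 := by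
    rw [← Finset.sum_add_distrib]
    exact Finset.sum_congr rfl fun p _ => by split <;> simp
  rw [e2]
  have hS2 : (∑ k, ∑ q, if q.1 ≠ i then Qi ⟨i, k⟩ q * x ⟨i, k⟩ * x q else 0)
      = ∑ p, ∑ k, if p.1 ≠ i then Qi p ⟨i, k⟩ * x p * x ⟨i, k⟩ else 0 := by
    rw [Finset.sum_comm]
    refine Finset.sum_congr rfl fun p _ => Finset.sum_congr rfl fun k _ => ?_
    split <;> [skip; rfl]
    rw [hQ.apply ⟨i, k⟩ p]
    ring
  have hS3 : (∑ p, if p.1 ≠ i then (∑ l, Qi p ⟨i, l⟩ * x p * x ⟨i, l⟩) else 0)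
      = ∑ p, ∑ k, if p.1 ≠ i then Qi p ⟨i, k⟩ * x p * x ⟨i, k⟩ else 0 := by
    refine Finset.sum_congr rfl fun p _ => ?_
    split <;> simp
  have hS4 : (∑ p, if p.1 ≠ i then ∑ q, if q.1 ≠ i then Qi p q * x p * x q else 0 else 0)
      = ∑ p, ∑ q, if p.1 ≠ i ∧ q.1 ≠ i then Qi p q * x p * x q else 0 := by
    refine Finset.sum_congr rfl fun p _ => ?_
    by_cases hp : p.1 ≠ i
    · rw [if_pos hp]
      exact Finset.sum_congr rfl fun q _ => by by_cases hq : q.1 ≠ i <;> simp [hp, hq]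
    · rw [if_neg hp]
      exact (Finset.sum_eq_zero fun q _ => by simp [hp]).symm
  rw [hS2, hS3, hS4]
  ring

lemma Fpay_rank_one (Q : (i : I) → Matrix ((i : I) × Fin (n i)) ((i : I) × Fin (n i)) ℝ)
    (c : (i : I) → ((i : I) × Fin (n i)) → ℝ) (i : I) (hQ : (Q i).IsSymm)
    (s : (i : I) → Fin (n i) → ℝ) :
    Fpay Q c i s (Matrix.vecMulVec (s i) (s i)) = payoff Q c i s := by
  unfold Fpay payoff
  rw [quad_decomp i (Q i) hQ (conc s)]
  have htr : Matrix.trace ((Matrix.of fun k l => Q i ⟨i, k⟩ ⟨i, l⟩)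
        * Matrix.vecMulVec (s i) (s i))
      = ∑ k, ∑ l, Q i ⟨i, k⟩ ⟨i, l⟩ * conc s ⟨i, k⟩ * conc s ⟨i, l⟩ := by
    simp only [Matrix.trace, Matrix.diag, Matrix.mul_apply, Matrix.of_apply,
      Matrix.vecMulVec_apply]
    exact Finset.sum_congr rfl fun k _ => Finset.sum_congr rfl fun l _ => by
      show Q i ⟨i, k⟩ ⟨i, l⟩ * (s i l * s i k) = _
      show _ = Q i ⟨i, k⟩ ⟨i, l⟩ * s i k * s i l
      ring
  rw [htr]
  simp only [conc]

end Aux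

/-- Existence of PNE: `G^MBQP` has at least one pure-strategy Nash
equilibrium if (i) the Key Property holds for every player, (ii) each `Q^{(i)}_{ii}` is
positive semidefinite, and (iii) the corresponding `G^CPP` has a pure-strategy Nash
equilibrium `((x_i*, X_i*))_i` with `x*_{ik} ∈ {0,1}` for every `k ∈ B_i` and `i`. -/
theorem mbqp_pne_exists
    (a : (i : I) → Fin (m i) → Fin (n i) → ℝ) (b : (i : I) → Fin (m i) → ℝ)
    (B : (i : I) → Set (Fin (n i))) (α : (i : I) → Fin (n i) → ℝ)
    (Q : (i : I) → Matrix ((i : I) × Fin (n i)) ((i : I) × Fin (n i)) ℝ)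
    (c : (i : I) → ((i : I) × Fin (n i)) → ℝ)
    (hQsym : ∀ i, (Q i).IsSymm)
    (hbounded : ∀ i, Bornology.IsBounded {y : Fin (n i) → ℝ | MBQPFeas a b B i y})
    (hKP : KeyProperty a b α)
    (hpsd : ∀ i, (Matrix.of fun k l => Q i ⟨i, k⟩ ⟨i, l⟩ :
      Matrix (Fin (n i)) (Fin (n i)) ℝ).PosSemidef)
    (hcpp : ∃ (s : (i : I) → Fin (n i) → ℝ)
      (XX : (i : I) → Matrix (Fin (n i)) (Fin (n i)) ℝ),
        CPP_PNE a b B α Q c s XX ∧ ∀ i, ∀ k ∈ B i, s i k = 0 ∨ s i k = 1) :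
    ∃ s : (i : I) → Fin (n i) → ℝ, MBQP_PNE a b B Q c s := by
  classical
  obtain ⟨s, XX, hPNE, hbin⟩ := hcpp
  refine ⟨s, fun i => ?_⟩
  obtain ⟨⟨h1, h2, h3, h4, h5⟩, hopt⟩ := hPNE i
  obtain ⟨w, hw1, hw2, hw3⟩ := hKP i
  obtain ⟨r, A, hA, hYA⟩ := h5
  have hXsymm : ∀ p q, XX i p q = XX i q p := by
    intro p q
    rw [hYA]
    simp only [Matrix.mul_apply, Matrix.transpose_apply]
    exact Finset.sum_congr rfl fun t _ => mul_comm _ _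
  have hXnn : ∀ p q, 0 ≤ XX i p q := by
    intro p q; rw [hYA]
    simp only [Matrix.mul_apply, Matrix.transpose_apply]
    exact Finset.sum_nonneg fun t _ => mul_nonneg (hA _ _) (hA _ _)
  have hyY : ∀ l, s i l = ∑ j, XX i l j * α i j := fun l => by
    rw [h4 l, trace_lin _ _ _ hXsymm]
  have hsnn : ∀ k, 0 ≤ s i k := fun k => by
    rw [hyY k]
    exact Finset.sum_nonneg fun j _ => mul_nonneg (hXnn _ _) (hw2 j)
  have hαdot : ∀ z : Fin (n i) → ℝ, (∀ j, a i j ⬝ᵥ z = b i j) → α i ⬝ᵥ z = 1 := by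
    intro z hz
    have h0 : α i ⬝ᵥ z = ∑ j, w j * (a i j ⬝ᵥ z) := by
      rw [hw1]
      simp only [dotProduct, Finset.sum_apply, Pi.smul_apply, smul_eq_mul,
        Finset.sum_mul, Finset.mul_sum]
      rw [Finset.sum_comm]
      exact Finset.sum_congr rfl fun j _ => Finset.sum_congr rfl fun k _ => by ring
    rw [h0]
    simp only [hz]
    exact hw3
  refine ⟨⟨h1, fun k hk => hbin i k hk, hsnn⟩, ?_⟩
  intro y hy
  obtain ⟨hy1, hy2, hy3⟩ := hy
  have hαy := hαdot y hy1
  have hfeas : CPPFeas a b B α i y (Matrix.vecMulVec y y) := by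
    refine ⟨hy1, ?_, ?_, ?_, 1, Matrix.of (fun j (_ : Fin 1) => y j), fun p q => hy3 p, ?_⟩
    · intro j
      have e : a i j ⬝ᵥ (Matrix.vecMulVec y y *ᵥ a i j) = (a i j ⬝ᵥ y) * (a i j ⬝ᵥ y) := by
        simp only [dotProduct, Matrix.mulVec, Matrix.vecMulVec_apply]
        rw [Finset.sum_mul_sum]
        refine Finset.sum_congr rfl fun p _ => ?_
        rw [Finset.mul_sum]
        exact Finset.sum_congr rfl fun q _ => by ring
      rw [e, hy1 j]
      exact (pow_two _).symm
    · intro k hk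
      rcases hy2 k hk with h | h <;> simp [Matrix.vecMulVec_apply, h]
    · intro l
      rw [trace_lin _ _ _ (fun p q => by simp only [Matrix.vecMulVec_apply]; ring)]
      simp only [Matrix.vecMulVec_apply]
      calc y l = y l * (α i ⬝ᵥ y) := by rw [hαy, mul_one]
        _ = ∑ j, y l * y j * α i j := by
            simp only [dotProduct, Finset.mul_sum]
            exact Finset.sum_congr rfl fun j _ => by ring
    · ext p q
      simp [Matrix.mul_apply, Matrix.vecMulVec_apply]
  have key := hopt y (Matrix.vecMulVec y y) hfeas
  have e1 : payoff Q c i s = Fpay Q c i s (Matrix.vecMulVec (s i) (s i)) :=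
    (Fpay_rank_one Q c i (hQsym i) s).symm
  have e2 : Fpay Q c i (Function.update s i y) (Matrix.vecMulVec y y)
      = payoff Q c i (Function.update s i y) := by
    have h := Fpay_rank_one Q c i (hQsym i) (Function.update s i y)
    rwa [Function.update_self] at h
  have e3 : Fpay Q c i s (Matrix.vecMulVec (s i) (s i)) ≤ Fpay Q c i s (XX i) := by
    have htr := trace_gap (hpsd i) ⟨r, A, hA, hYA⟩ hyY (hαdot (s i) h1)
    unfold Fpay
    linarith
  linarith
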